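/- The double integral ∫₀¹ ∫₀¹ 1/(x₁·x₂ + q) dx₂ dx₁ satisfies ∫₀¹ ∫₀¹ 1/(x₁·x₂ + q) dx₂ dx₁ = Θ((log q)²) as q → 0⁺. -/

import Mathlib

open MeasureTheory Filter Topology

/-- `I = Θ(R)` as `q → 0⁺`: there exist constants `0 < c ≤ C` and `q₀ > 0` such that
`c·R q ≤ I q ≤ C·R q` for all `0 < q < q₀`. -/
def IsThetaAtZero (I R : ℝ → ℝ) : Prop :=
  ∃ c C q₀ : ℝ, 0 < c ∧ c ≤ C ∧ 0 < q₀ ∧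
    ∀ q : ℝ, 0 < q → q < q₀ → c * R q ≤ I q ∧ I q ≤ C * R q

/-- Exact value of the inner integral: `∫₀¹ 1/(a x + q) dx = (log(a+q) - log q)/a`. -/
lemma aux_integral_inv_linear {a q : ℝ} (ha : 0 < a) (hq : 0 < q) :
    ∫ x in (0:ℝ)..1, 1 / (a * x + q) = (Real.log (a + q) - Real.log q) / a := by
  have key := intervalIntegral.integral_eq_sub_of_hasDerivAt
      (f := fun x : ℝ => Real.log (a * x + q) / a)
      (f' := fun x : ℝ => 1 / (a * x + q)) (a := (0:ℝ)) (b := 1) ?_ ?_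
  · rw [key]
    rw [mul_one, mul_zero, zero_add, sub_div]
  · intro x hx
    rw [Set.uIcc_of_le zero_le_one] at hx
    have hpos : 0 < a * x + q := by nlinarith [hx.1]
    have h1 : HasDerivAt (fun x : ℝ => a * x + q) a x := by
      simpa using ((hasDerivAt_id x).const_mul a).add_const q
    have h2 := ((Real.hasDerivAt_log hpos.ne').comp x h1).div_const a
    convert h2 using 1
    · rfl
    · rfl
    · field_simp
  · apply ContinuousOn.intervalIntegrable
    apply ContinuousOn.div continuousOn_const
      (((continuous_const.mul continuous_id).add continuous_const).continuousOn)
    intro x hx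
    rw [Set.uIcc_of_le zero_le_one] at hx
    simp only [Pi.add_apply, Pi.mul_apply, id_eq]
    exact ne_of_gt (by nlinarith [hx.1])

/-- Pointwise nonnegativity of the reduced integrand. -/
lemma aux_g_nonneg {q : ℝ} (hq : 0 < q) {x : ℝ} (hx : 0 ≤ x) :
    0 ≤ (Real.log (x + q) - Real.log q) / x := by
  rcases eq_or_lt_of_le hx with h | h
  · simp [← h]
  · apply div_nonneg _ h.le
    have := Real.log_le_log hq (by linarith : q ≤ x + q)
    linarith

/-- Pointwise upper bound `g q x ≤ 1/q`. -/
lemma aux_g_le {q : ℝ} (hq : 0 < q) {x : ℝ} (hx : 0 < x) :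
    (Real.log (x + q) - Real.log q) / x ≤ 1 / q := by
  have h2 : Real.log (x + q) - Real.log q ≤ x / q := by
    rw [← Real.log_div (by positivity) hq.ne']
    have h := Real.log_le_sub_one_of_pos (show 0 < (x + q) / q by positivity)
    calc Real.log ((x + q) / q) ≤ (x + q) / q - 1 := h
      _ = x / q := by field_simp; ring
  rw [div_le_div_iff₀ hx hq]
  have : (x / q) * q = x := by field_simp
  nlinarith [h2, hq, hx]

/-- Integrability of the reduced integrand on `[0,1]`. -/
lemma aux_g_integrable {q : ℝ} (hq : 0 < q) :
    IntervalIntegrable (fun x : ℝ => (Real.log (x + q) - Real.log q) / x) volume 0 1 := by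
  rw [intervalIntegrable_iff_integrableOn_Ioc_of_le zero_le_one]
  have hmeas : Measurable fun x : ℝ => (Real.log (x + q) - Real.log q) / x :=
    ((Real.measurable_log.comp (measurable_id.add_const q)).sub measurable_const).div
      measurable_id
  apply Integrable.mono' (g := fun _ : ℝ => 1 / q)
    (integrableOn_const measure_Ioc_lt_top.ne) hmeas.aestronglyMeasurable.restrict
  filter_upwards [ae_restrict_mem measurableSet_Ioc] with x hx
  rw [Real.norm_eq_abs, abs_of_nonneg (aux_g_nonneg hq hx.1.le)]
  exact aux_g_le hq hx.1

/-- Reduction of the double integral to a single integral. -/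
lemma aux_double_eq {q : ℝ} (hq : 0 < q) :
    (∫ x₁ in (0:ℝ)..1, ∫ x₂ in (0:ℝ)..1, 1 / (x₁ * x₂ + q))
      = ∫ x in (0:ℝ)..1, (Real.log (x + q) - Real.log q) / x := by
  apply intervalIntegral.integral_congr_ae
  refine Eventually.of_forall (fun x hx => ?_)
  rw [Set.uIoc_of_le zero_le_one] at hx
  exact aux_integral_inv_linear hx.1 hq

/-- Theorem 4.3, Case 4:
`∫₀¹ ∫₀¹ 1/(x₁·x₂ + q) dx₂ dx₁ = Θ((log q)²)` as `q → 0⁺`. -/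
theorem two_dim_monomial_scaling_equal_one :
    IsThetaAtZero
      (fun q : ℝ => ∫ x₁ in (0:ℝ)..1, ∫ x₂ in (0:ℝ)..1, 1 / (x₁ * x₂ + q))
      (fun q : ℝ => (Real.log q) ^ 2) := by
  refine ⟨1/4, 3, Real.exp (-1), by norm_num, by norm_num, Real.exp_pos _, ?_⟩
  intro q hq hq1
  have hq1' : q < 1 := lt_trans hq1 (Real.exp_lt_one_iff.2 (by norm_num))
  set L : ℝ := -Real.log q with hLdef
  have hL1 : 1 ≤ L := by
    have h := Real.log_lt_log hq hq1
    rw [Real.log_exp] at h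
    simp only [hLdef]; linarith
  have hL0 : 0 < L := by linarith
  have hrw : Real.log q ^ 2 = L ^ 2 := by simp only [hLdef]; ring
  simp only
  rw [aux_double_eq hq, hrw]
  set g : ℝ → ℝ := fun x => (Real.log (x + q) - Real.log q) / x with hgdef
  have hgint : IntervalIntegrable g volume 0 1 := aux_g_integrable hq
  -- the square-root splitting point
  set s : ℝ := Real.sqrt q with hsdef
  have hs0 : 0 < s := Real.sqrt_pos.2 hq
  have hs1 : s ≤ 1 := Real.sqrt_le_one.mpr hq1'.le
  have hsub : ∀ a b : ℝ, 0 ≤ a → a ≤ b → b ≤ 1 →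
      Set.uIcc a b ⊆ Set.uIcc (0:ℝ) 1 := by
    intro a b h1 h2 h3
    rw [Set.uIcc_of_le h2, Set.uIcc_of_le zero_le_one]
    exact Set.Icc_subset_Icc h1 h3
  constructor
  · -- lower bound
    have hsplit : (∫ x in (0:ℝ)..1, g x)
        = (∫ x in (0:ℝ)..s, g x) + ∫ x in s..1, g x := by
      rw [intervalIntegral.integral_add_adjacent_intervals
        (hgint.mono_set (hsub 0 s le_rfl hs0.le hs1))
        (hgint.mono_set (hsub s 1 hs0.le hs1 le_rfl))]
    have hpos : 0 ≤ ∫ x in (0:ℝ)..s, g x :=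
      intervalIntegral.integral_nonneg hs0.le (fun x hx => aux_g_nonneg hq hx.1)
    have hcint : IntervalIntegrable (fun x : ℝ => (L/2) * (1/x)) volume s 1 := by
      apply ContinuousOn.intervalIntegrable
      apply continuousOn_const.mul
      apply ContinuousOn.div continuousOn_const continuousOn_id
      intro x hx
      rw [Set.uIcc_of_le hs1] at hx
      exact ne_of_gt (lt_of_lt_of_le hs0 hx.1)
    have hmono : (∫ x in s..1, (L/2) * (1/x)) ≤ ∫ x in s..1, g x := by
      apply intervalIntegral.integral_mono_on hs1 hcint
        (hgint.mono_set (hsub s 1 hs0.le hs1 le_rfl))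
      intro x hx
      have hx0 : 0 < x := lt_of_lt_of_le hs0 hx.1
      simp only [hgdef]
      rw [mul_one_div]
      apply div_le_div_of_nonneg_right ?_ hx0.le |>.trans_eq rfl
      · -- L/2 ≤ log(x+q) - log q
        have h1 : Real.log s ≤ Real.log x := Real.log_le_log hs0 hx.1
        have h2 : Real.log x ≤ Real.log (x + q) :=
          Real.log_le_log hx0 (by linarith)
        have h3 : Real.log s = Real.log q / 2 := Real.log_sqrt hq.le
        simp only [hLdef]
        linarith
    have hcval : (∫ x in s..1, (L/2) * (1/x)) = (L/2) * (L/2) := by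
      rw [intervalIntegral.integral_const_mul, integral_one_div]
      · congr 1
        rw [one_div, Real.log_inv, Real.log_sqrt hq.le]
        simp only [hLdef]; ring
      · rw [Set.uIcc_of_le hs1]
        intro h
        exact absurd h.1 (not_le.2 hs0)
    rw [hsplit]
    nlinarith [hmono, hcval, hpos]
  · -- upper bound
    have hsplit : (∫ x in (0:ℝ)..1, g x)
        = (∫ x in (0:ℝ)..q, g x) + ∫ x in q..1, g x := by
      rw [intervalIntegral.integral_add_adjacent_intervals
        (hgint.mono_set (hsub 0 q le_rfl hq.le hq1'.le))
        (hgint.mono_set (hsub q 1 hq.le hq1'.le le_rfl))]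
    have h1 : (∫ x in (0:ℝ)..q, g x) ≤ 1 := by
      have := intervalIntegral.integral_mono_on hq.le
        (hgint.mono_set (hsub 0 q le_rfl hq.le hq1'.le))
        (intervalIntegrable_const (c := 1/q))
        (fun x hx => by
          rcases eq_or_lt_of_le hx.1 with h | h
          · simp only [hgdef, ← h]
            simp
            positivity
          · exact aux_g_le hq h)
      calc (∫ x in (0:ℝ)..q, g x) ≤ ∫ _x in (0:ℝ)..q, (1/q : ℝ) := this
        _ = 1 := by
          rw [intervalIntegral.integral_const, smul_eq_mul]
          field_simp; ring
    have hcint : IntervalIntegrable (fun x : ℝ => (Real.log 2 + L) * (1/x)) volume q 1 := by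
      apply ContinuousOn.intervalIntegrable
      apply continuousOn_const.mul
      apply ContinuousOn.div continuousOn_const continuousOn_id
      intro x hx
      rw [Set.uIcc_of_le hq1'.le] at hx
      exact ne_of_gt (lt_of_lt_of_le hq hx.1)
    have h2 : (∫ x in q..1, g x) ≤ (Real.log 2 + L) * L := by
      have hcval : (∫ x in q..1, (Real.log 2 + L) * (1/x)) = (Real.log 2 + L) * L := by
        rw [intervalIntegral.integral_const_mul, integral_one_div]
        · congr 1
          rw [one_div, Real.log_inv]
        · rw [Set.uIcc_of_le hq1'.le]
          intro h
          exact absurd h.1 (not_le.2 hq)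
      rw [← hcval]
      apply intervalIntegral.integral_mono_on hq1'.le
        (hgint.mono_set (hsub q 1 hq.le hq1'.le le_rfl)) hcint
      intro x hx
      have hx0 : 0 < x := lt_of_lt_of_le hq hx.1
      simp only [hgdef]
      rw [mul_one_div]
      apply div_le_div_of_nonneg_right ?_ hx0.le |>.trans_eq rfl
      have h3 : Real.log (x + q) ≤ Real.log 2 :=
        Real.log_le_log (by positivity) (by linarith [hx.2])
      simp only [hLdef]
      linarith
    have hlog2 : Real.log 2 ≤ 1 := by
      have := Real.log_le_sub_one_of_pos (show (0:ℝ) < 2 by norm_num)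
      linarith
    rw [hsplit]
    nlinarith [h1, h2, hlog2, hL1]
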